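/- arXiv:2108.06059 — 3 statements merged into one kernel-verified Lean document; each statement's English description precedes it below -/
import Mathlib

section
/- Let 𝒬 be the rational comb with its path metric and basepoint b = (0,0). Then the horofunction map ψ : 𝒬 → Lip^1_b(𝒬), z ↦ ψ_z, is not a homeomorphism onto its image: there exist a point q ∈ 𝒬 and a sequence q_n ∈ 𝒬 such that ψ_{q_n}(x) → ψ_q(x) for every x ∈ 𝒬, while q_n does not converge to q in 𝒬. -/
open Filter Topology

/-- The rational comb `𝒬 = (ℝ × {0}) ∪ (ℚ × ℝ) ⊆ ℝ²`: a point is on the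
horizontal spine (second coordinate zero) or on a vertical tooth over a
rational number. -/
@[ext]
structure Comb where
  pt : ℝ × ℝ
  mem : pt.2 = 0 ∨ ∃ q : ℚ, (q : ℝ) = pt.1

/-- The inclusion `ι : 𝒬 → ℝ²`. -/
def Comb.ι (x : Comb) : ℝ × ℝ := x.pt

/-- The path metric of the comb:
`d((a,s),(c,t)) = |s − t|` if `a = c`, and `|s| + |a − c| + |t|` otherwise. -/
noncomputable def combDist (x y : Comb) : ℝ :=
  if x.pt.1 = y.pt.1 then |x.pt.2 - y.pt.2|
  else |x.pt.2| + |x.pt.1 - y.pt.1| + |y.pt.2|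

noncomputable instance : MetricSpace Comb where
  dist := combDist
  dist_self x := by
    show combDist x x = 0
    simp [combDist]
  dist_comm x y := by
    show combDist x y = combDist y x
    unfold combDist
    rcases eq_or_ne x.pt.1 y.pt.1 with h | h
    · rw [if_pos h, if_pos h.symm, abs_sub_comm]
    · rw [if_neg h, if_neg (Ne.symm h), abs_sub_comm]
      ring
  dist_triangle x y z := by
    show combDist x z ≤ combDist x y + combDist y z
    unfold combDist
    obtain ⟨⟨a, s⟩, _⟩ := x
    obtain ⟨⟨c, t⟩, _⟩ := y
    obtain ⟨⟨e, u⟩, _⟩ := z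
    simp only
    have hsu : |s - u| ≤ |s| + |u| := by
      simpa [sub_eq_add_neg] using abs_add_le s (-u)
    have hst : |s - t| ≤ |s| + |t| := by
      simpa [sub_eq_add_neg] using abs_add_le s (-t)
    have htu : |t - u| ≤ |t| + |u| := by
      simpa [sub_eq_add_neg] using abs_add_le t (-u)
    have hs' : |s| - |t| ≤ |s - t| := abs_sub_abs_le_abs_sub s t
    have hu' : |u| - |t| ≤ |t - u| := by
      rw [abs_sub_comm]; exact abs_sub_abs_le_abs_sub u t
    by_cases h2 : a = c
    · subst h2
      by_cases h1 : a = e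
      · subst h1
        simp only [if_pos rfl]
        exact abs_sub_le s t u
      · rw [if_neg h1, if_pos rfl, if_neg h1]
        linarith
    · by_cases h3 : c = e
      · subst h3
        rw [if_neg h2, if_neg h2, if_pos rfl]
        linarith
      · by_cases h1 : a = e
        · subst h1
          rw [if_pos rfl, if_neg h2, if_neg h3]
          have := abs_nonneg (a - c)
          have := abs_nonneg (c - a)
          have := abs_nonneg t
          linarith [abs_sub_le s t u, htu]
        · rw [if_neg h1, if_neg h2, if_neg h3]
          have := abs_sub_le a c e
          have := abs_nonneg t
          linarith
  eq_of_dist_eq_zero := by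
    intro x y h
    have h : combDist x y = 0 := h
    unfold combDist at h
    rcases eq_or_ne x.pt.1 y.pt.1 with h1 | h1
    · rw [if_pos h1] at h
      have h2 : x.pt.2 = y.pt.2 := by
        have := abs_eq_zero.mp h
        linarith
      ext
      · exact h1
      · exact h2
    · rw [if_neg h1] at h
      exfalso
      have hpos : 0 < |x.pt.1 - y.pt.1| := abs_pos.mpr (sub_ne_zero.mpr h1)
      have := abs_nonneg x.pt.2
      have := abs_nonneg y.pt.2
      linarith

/-- The basepoint `b = (0,0)` of the comb. -/
def combBase : Comb := ⟨(0, 0), Or.inl rfl⟩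

/-- The horofunction at `z` with basepoint `b`: `ψ_z(x) = d(x,z) - d(b,z)`. -/
noncomputable def horo {X : Type*} [MetricSpace X] (b z : X) : X → ℝ :=
  fun x => dist x z - dist b z

/-- The set of `C`-Lipschitz real-valued functions vanishing at the
basepoint `b`, with the topology of pointwise convergence. -/
def LipB {X : Type*} [MetricSpace X] (b : X) (C : ℝ) : Set (X → ℝ) :=
  {f | (∀ x y : X, |f x - f y| ≤ C * dist x y) ∧ f b = 0}

theorem comb_dist_def (x y : Comb) : dist x y = combDist x y := rfl

/-- The tooth point `(1/(n+1), 1)`. -/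
noncomputable def combQn (n : ℕ) : Comb :=
  ⟨((((1 : ℚ)/(n+1) : ℚ) : ℝ), 1), Or.inr ⟨(1 : ℚ)/(n+1), rfl⟩⟩

lemma combQn_fst (n : ℕ) : (combQn n).pt.1 = 1/(n+1 : ℝ) := by
  show ((1/(↑n+1:ℚ) : ℚ) : ℝ) = _
  push_cast
  ring

lemma combQn_fst_pos (n : ℕ) : 0 < (combQn n).pt.1 := by
  rw [combQn_fst]; positivity

lemma horo_base (x : Comb) : horo combBase combBase x = |x.pt.2| + |x.pt.1| := by
  unfold horo
  rw [comb_dist_def, comb_dist_def]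
  unfold combDist combBase
  rcases eq_or_ne x.pt.1 0 with h | h
  · simp [h]
  · rw [if_neg h]
    simp

lemma comb_key : ∃ (q : Comb) (qn : ℕ → Comb),
      (∀ x : Comb,
        Tendsto (fun n => horo combBase (qn n) x) atTop (𝓝 (horo combBase q x))) ∧
      ¬ Tendsto qn atTop (𝓝 q) := by
  refine ⟨combBase, combQn, ?_, ?_⟩
  · intro x
    obtain ⟨⟨a, s⟩, hx⟩ := x
    set x : Comb := ⟨(a, s), hx⟩ with hxdef
    have hc : Tendsto (fun n : ℕ => (combQn n).pt.1) atTop (𝓝 0) := by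
      simp only [combQn_fst]
      exact tendsto_one_div_add_atTop_nhds_zero_nat
    -- eventually a ≠ (combQn n).pt.1
    have hev : ∀ᶠ n in atTop, a ≠ (combQn n).pt.1 := by
      rcases eq_or_ne a 0 with ha | ha
      · exact Eventually.of_forall fun n => by
          rw [ha]; exact (ne_of_lt (combQn_fst_pos n))
      · have : ∀ᶠ n in atTop, (combQn n).pt.1 < |a| :=
          hc.eventually_lt_const (abs_pos.mpr ha)
        filter_upwards [this] with n hn he
        rw [he, abs_of_pos (combQn_fst_pos n)] at hn
        exact lt_irrefl _ hn
    have heq : ∀ᶠ n in atTop,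
        (fun n => |s| + |a - (combQn n).pt.1| - (combQn n).pt.1) n
          = horo combBase (combQn n) x := by
      filter_upwards [hev] with n hn
      unfold horo
      rw [comb_dist_def, comb_dist_def]
      unfold combDist
      have h1 : x.pt.1 ≠ (combQn n).pt.1 := hn
      have h2 : combBase.pt.1 ≠ (combQn n).pt.1 := by
        show (0:ℝ) ≠ _
        exact (ne_of_lt (combQn_fst_pos n))
      rw [if_neg h1, if_neg h2]
      have h3 : (combQn n).pt.2 = 1 := rfl
      have h4 : combBase.pt.2 = (0:ℝ) := rfl
      have h5 : x.pt.2 = s := rfl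
      have h6 : x.pt.1 = a := rfl
      have h9 : combBase.pt.1 = (0:ℝ) := rfl
      rw [h3, h4, h5, h6, h9]
      rw [abs_one, abs_zero]
      have : |(0:ℝ) - (combQn n).pt.1| = (combQn n).pt.1 := by
        rw [zero_sub, abs_neg, abs_of_pos (combQn_fst_pos n)]
      rw [this]; ring
    rw [horo_base]
    have h7 : x.pt.2 = s := rfl
    have h8 : x.pt.1 = a := rfl
    rw [h7, h8]
    refine Tendsto.congr' heq ?_
    have : Tendsto (fun n : ℕ => |s| + |a - (combQn n).pt.1| - (combQn n).pt.1)
        atTop (𝓝 (|s| + |a - 0| - 0)) := by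
      apply Tendsto.sub
      · exact tendsto_const_nhds.add ((tendsto_const_nhds.sub hc).abs)
      · exact hc
    simpa using this
  · intro h
    have := (Metric.tendsto_atTop.mp h 1 one_pos)
    obtain ⟨N, hN⟩ := this
    have h1 := hN N le_rfl
    have : dist (combQn N) combBase = (combQn N).pt.1 + 1 := by
      rw [comb_dist_def]
      unfold combDist
      have h2 : (combQn N).pt.1 ≠ combBase.pt.1 := ne_of_gt (combQn_fst_pos N)
      rw [if_neg h2]
      have h3 : (combQn N).pt.2 = (1:ℝ) := rfl
      have h4 : combBase.pt.2 = (0:ℝ) := rfl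
      have h5 : combBase.pt.1 = (0:ℝ) := rfl
      rw [h3, h4, h5, abs_one, abs_zero, sub_zero,
        abs_of_pos (combQn_fst_pos N)]
      ring
    rw [this] at h1
    have := combQn_fst_pos N
    linarith

/-- On the rational comb `𝒬` with basepoint `b = (0,0)`, the horofunction map
`ψ : 𝒬 → Lip¹_b(𝒬)` is not a homeomorphism onto its image: there are a point
`q` and a sequence `q_n` in `𝒬` with `ψ_{q_n} → ψ_q` pointwise while `q_n`
does not converge to `q` in `𝒬`. -/
theorem stmt7 :
    (¬ ∃ Ψ : Comb → (LipB combBase 1 : Set (Comb → ℝ)),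
        (∀ z : Comb, (Ψ z : Comb → ℝ) = horo combBase z) ∧
        Topology.IsEmbedding Ψ) ∧
    ∃ (q : Comb) (qn : ℕ → Comb),
      (∀ x : Comb,
        Tendsto (fun n => horo combBase (qn n) x) atTop (𝓝 (horo combBase q x))) ∧
      ¬ Tendsto qn atTop (𝓝 q) := by
  obtain ⟨q, qn, hpt, hnot⟩ := comb_key
  refine ⟨?_, q, qn, hpt, hnot⟩
  rintro ⟨Ψ, hΨ, hemb⟩
  apply hnot
  rw [hemb.isInducing.tendsto_nhds_iff]
  rw [tendsto_subtype_rng]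
  rw [tendsto_pi_nhds]
  intro x
  simp only [Function.comp, hΨ]
  exact hpt x
end

section
/- Let 𝒬 be the rational comb with its path metric, basepoint b = (0,0), and inclusion ι : 𝒬 → ℝ². Let r = (r₁, r₂) ∈ ℝ² with r₁ irrational, and let q_n ∈ 𝒬 be a sequence with ι(q_n) → r in the Euclidean metric of ℝ². Then for every x ∈ 𝒬, the horofunctions satisfy ψ_{q_n}(x) → ψ_{(r₁,0)}(x) as n → ∞, where (r₁,0) is the point of the horizontal spine of 𝒬 over r₁. In particular, the pointwise limit of these horofunctions is the horofunction of an interior point of 𝒬, independent of r₂. -/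
open Filter Topology

/-- Let `r = (r₁, r₂) ∈ ℝ²` with `r₁` irrational, and let `q_n ∈ 𝒬` be a
sequence with `ι(q_n) → r` in `ℝ²`.  Then for every `x ∈ 𝒬` the horofunctions
satisfy `ψ_{q_n}(x) → ψ_{(r₁,0)}(x)`, where `(r₁,0)` is the point of the
horizontal spine of `𝒬` over `r₁`: the pointwise limit is the horofunction of
an interior point of `𝒬`, independent of `r₂`. -/
theorem stmt9 (r₁ r₂ : ℝ) (hr : Irrational r₁) (qn : ℕ → Comb)
    (hq : Tendsto (fun n => (qn n).ι) atTop (𝓝 (r₁, r₂))) :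
    ∀ x : Comb,
      Tendsto (fun n => horo combBase (qn n) x) atTop
        (𝓝 (horo combBase ⟨(r₁, 0), Or.inl rfl⟩ x)) := by

  intro x
  have hr0 : r₁ ≠ 0 := hr.ne_zero
  have h1 : Tendsto (fun n => (qn n).pt.1) atTop (𝓝 r₁) :=
    (continuous_fst.tendsto _).comp hq
  have hx2 : x.pt.1 = r₁ → x.pt.2 = 0 := by
    intro h
    rcases x.mem with h0 | ⟨q, hq'⟩
    · exact h0
    · exact absurd ⟨q, by rw [hq', h]⟩ hr
  have hdistb : ∀ y : Comb, y.pt.1 ≠ 0 → dist combBase y = |y.pt.1| + |y.pt.2| := by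
    intro y hy
    show combDist combBase y = _
    unfold combDist
    rw [if_neg (by simpa [combBase] using Ne.symm hy)]
    simp [combBase, abs_sub_comm]
  have hev : ∀ᶠ n in atTop, horo combBase (qn n) x
      = |x.pt.2| + |x.pt.1 - (qn n).pt.1| - |(qn n).pt.1| := by
    have hne0 : ∀ᶠ n in atTop, (qn n).pt.1 ≠ 0 := h1.eventually_ne hr0
    have hnex : ∀ᶠ n in atTop, x.pt.1 = r₁ ∨ (qn n).pt.1 ≠ x.pt.1 := by
      rcases eq_or_ne x.pt.1 r₁ with h | h
      · exact Eventually.of_forall fun n => Or.inl h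
      · exact (h1.eventually_ne (fun hh => h hh.symm)).mono fun n hn => Or.inr hn
    filter_upwards [hne0, hnex] with n h0 hx
    have hb := hdistb (qn n) h0
    show dist x (qn n) - dist combBase (qn n) = _
    rw [hb]
    have hd : dist x (qn n) = combDist x (qn n) := rfl
    rw [hd]; unfold combDist
    rcases eq_or_ne x.pt.1 (qn n).pt.1 with he | he
    · rw [if_pos he]
      rcases hx with hxr | hne
      · have hx20 := hx2 hxr
        rw [hx20, he]
        simp [abs_sub_comm]
      · exact absurd he.symm hne
    · rw [if_neg he]
      ring
  have hlim : Tendsto (fun n => |x.pt.2| + |x.pt.1 - (qn n).pt.1| - |(qn n).pt.1|)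
      atTop (𝓝 (|x.pt.2| + |x.pt.1 - r₁| - |r₁|)) := by
    exact (tendsto_const_nhds.add ((tendsto_const_nhds.sub h1).abs)).sub h1.abs
  have htarget : horo combBase ⟨(r₁, 0), Or.inl rfl⟩ x
      = |x.pt.2| + |x.pt.1 - r₁| - |r₁| := by
    show dist x _ - dist combBase _ = _
    have hb := hdistb ⟨(r₁, 0), Or.inl rfl⟩ hr0
    rw [hb]
    have hd : dist x (⟨(r₁, 0), Or.inl rfl⟩ : Comb) = combDist x ⟨(r₁, 0), Or.inl rfl⟩ := rfl
    rw [hd]; unfold combDist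
    rcases eq_or_ne x.pt.1 r₁ with he | he
    · rw [if_pos he]
      have hx20 := hx2 he
      rw [hx20, he]
      simp
    · rw [if_neg he]
      simp
  rw [htarget]
  exact Tendsto.congr' (hev.mono fun n h => h.symm) hlim
end

section
/- Let 𝒬 be the rational comb with its path metric and basepoint b = (0,0). Let t_n = (a_n, s_n) ∈ 𝒬 be a sequence with a_n → +∞. Then for every q = (c,t) ∈ 𝒬, the horofunctions satisfy ψ_{t_n}(q) → |t| − c as n → ∞; equivalently, the limit function ψ_θ satisfies ψ_θ(q) = d((c,0), q) − d((c,0), b) when c > 0 and ψ_θ(q) = d(q,b) when c ≤ 0, where (c,0) is the point of the horizontal spine below q. In particular the limit does not depend on the heights s_n. -/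
open Filter Topology

/-- Let `t_n = (a_n, s_n) ∈ 𝒬` with `a_n → +∞`.  Then for every
`q = (c,t) ∈ 𝒬` the horofunctions satisfy `ψ_{t_n}(q) → |t| − c`;
equivalently, the limit function `ψ_θ` satisfies
`ψ_θ(q) = d((c,0), q) − d((c,0), b)` when `c > 0` and `ψ_θ(q) = d(q,b)` when
`c ≤ 0`, where `(c,0)` is the point of the horizontal spine below `q`.
In particular the limit does not depend on the heights `s_n`. -/
theorem stmt10 (tn : ℕ → Comb)
    (ha : Tendsto (fun n => (tn n).pt.1) atTop atTop) :
    ∀ q : Comb,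
      Tendsto (fun n => horo combBase (tn n) q) atTop (𝓝 (|q.pt.2| - q.pt.1)) ∧
      (0 < q.pt.1 →
        |q.pt.2| - q.pt.1 =
          dist (⟨(q.pt.1, 0), Or.inl rfl⟩ : Comb) q -
            dist (⟨(q.pt.1, 0), Or.inl rfl⟩ : Comb) combBase) ∧
      (q.pt.1 ≤ 0 → |q.pt.2| - q.pt.1 = dist q combBase) := by
  intro q
  refine ⟨?_, ?_, ?_⟩
  · have hev : ∀ᶠ n in atTop, horo combBase (tn n) q = |q.pt.2| - q.pt.1 := by
      filter_upwards [ha.eventually_gt_atTop (max q.pt.1 0)] with n hn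
      have h1 : q.pt.1 < (tn n).pt.1 := lt_of_le_of_lt (le_max_left _ _) hn
      have h0 : (0:ℝ) < (tn n).pt.1 := lt_of_le_of_lt (le_max_right _ _) hn
      show combDist q (tn n) - combDist combBase (tn n) = _
      unfold combDist
      rw [if_neg (ne_of_lt h1)]
      rw [if_neg (show (combBase.pt.1 : ℝ) ≠ (tn n).pt.1 from by
        simpa [combBase] using ne_of_lt h0)]
      have e1 : |q.pt.1 - (tn n).pt.1| = (tn n).pt.1 - q.pt.1 := by
        rw [abs_of_neg (by linarith)]; ring
      have e2 : |combBase.pt.1 - (tn n).pt.1| = (tn n).pt.1 := by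
        simp [combBase, abs_of_pos h0]
      rw [e1, e2]
      simp [combBase]
      ring
    exact Tendsto.congr' (Filter.EventuallyEq.symm hev) tendsto_const_nhds
  · intro hc
    show _ = combDist _ q - combDist _ combBase
    unfold combDist
    rw [if_pos rfl]
    rw [if_neg (show q.pt.1 ≠ combBase.pt.1 from by simpa [combBase] using ne_of_gt hc)]
    simp [combBase, abs_of_pos hc, abs_sub_comm]
  · intro hc
    show _ = combDist q combBase
    unfold combDist
    rcases eq_or_lt_of_le hc with h | h
    · rw [if_pos (by simpa [combBase] using h)]
      rw [h]; simp [combBase]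
    · rw [if_neg (show q.pt.1 ≠ combBase.pt.1 from by simpa [combBase] using ne_of_lt h)]
      simp [combBase, abs_of_neg h]
      ring
end
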